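/- arXiv:2311.03165 — 5 statements merged into one kernel-verified Lean document; each statement's English description precedes it below -/
import Mathlib

section
/- Under the bounds $N_m \leq N(x) \leq N_M$ and $L_m \leq L(x) \leq L_M$ with positive constants, the function $\chi_1(\eta) = \int_{\alpha_0}^{\eta} \frac{E_1(v)}{v^2 L(u(v))} dv$ satisfies $\chi_1(\eta) \leq \frac{a \exp(a^2 \frac{N_m}{L_M}\alpha_0^2)}{L_m}\sqrt{\frac{N_m}{L_M}} \, h(\eta)$, where $h(\eta) = \sqrt{\pi}\,\mathrm{erf}(a\sqrt{N_m/L_M}\,\alpha_0) - \sqrt{\pi}\,\mathrm{erf}(a\sqrt{N_m/L_M}\,\eta) + \frac{\sqrt{L_M}}{a\sqrt{N_m}\alpha_0}\exp(-a^2\frac{N_m}{L_M}\alpha_0^2) - \frac{\sqrt{L_M}}{a\sqrt{N_m}\eta}\exp(-a^2\frac{N_m}{L_M}\eta^2)$. -/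
open Real Set intervalIntegral

noncomputable def erf (x : ℝ) : ℝ :=
  (2 / Real.sqrt π) * ∫ t in (0:ℝ)..x, Real.exp (-t ^ 2)

lemma erf_hasDerivAt (y : ℝ) : HasDerivAt erf ((2 / Real.sqrt π) * Real.exp (-y ^ 2)) y := by
  have hc : Continuous fun t : ℝ => Real.exp (-t ^ 2) :=
    Real.continuous_exp.comp (continuous_pow 2).neg
  have h := (hc.integral_hasStrictDerivAt 0 y).hasDerivAt
  exact h.const_mul (2 / Real.sqrt π)

lemma key_integral (b α₀ η : ℝ) (hb : 0 < b) (hα : 0 < α₀) (hη : α₀ ≤ η) :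
    ∫ v in α₀..η, Real.exp (-(b ^ 2) * v ^ 2) / v ^ 2
      = b * Real.sqrt π * erf (b * α₀) - b * Real.sqrt π * erf (b * η)
        + Real.exp (-(b ^ 2) * α₀ ^ 2) / α₀ - Real.exp (-(b ^ 2) * η ^ 2) / η := by
  have hpi : Real.sqrt π ≠ 0 := by positivity
  set G : ℝ → ℝ := fun x => -(Real.exp (-(b ^ 2) * x ^ 2)) / x - b * Real.sqrt π * erf (b * x)
    with hG
  have hGderiv : ∀ x ∈ Set.uIcc α₀ η, HasDerivAt G (Real.exp (-(b ^ 2) * x ^ 2) / x ^ 2) x := by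
    intro x hx
    rw [Set.uIcc_of_le hη] at hx
    have hx0 : 0 < x := hα.trans_le hx.1
    have h1 : HasDerivAt (fun x : ℝ => Real.exp (-(b ^ 2) * x ^ 2))
        (Real.exp (-(b ^ 2) * x ^ 2) * (-(b ^ 2) * (2 * x))) x := by
      have h0 : HasDerivAt (fun x : ℝ => -(b ^ 2) * x ^ 2) (-(b ^ 2) * (2 * x)) x := by
        simpa using (hasDerivAt_pow 2 x).const_mul (-(b ^ 2))
      exact h0.exp
    have hterm1 : HasDerivAt (fun x : ℝ => -(Real.exp (-(b ^ 2) * x ^ 2)) / x)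
        ((-(Real.exp (-(b ^ 2) * x ^ 2) * (-(b ^ 2) * (2 * x))) * x
          - -(Real.exp (-(b ^ 2) * x ^ 2)) * 1) / x ^ 2) x :=
      h1.neg.div (hasDerivAt_id x) hx0.ne'
    have hbx : HasDerivAt (fun x : ℝ => b * x) b x := by
      simpa using (hasDerivAt_id x).const_mul b
    have hterm2 : HasDerivAt (fun x : ℝ => erf (b * x))
        ((2 / Real.sqrt π) * Real.exp (-(b * x) ^ 2) * b) x :=
      (erf_hasDerivAt (b * x)).comp x hbx
    have h := hterm1.sub (hterm2.const_mul (b * Real.sqrt π))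
    refine HasDerivAt.congr_deriv h ?_
    have he : Real.exp (-(b * x) ^ 2) = Real.exp (-(b ^ 2) * x ^ 2) := by ring_nf
    rw [he]
    field_simp
    ring
  have hfint : IntervalIntegrable (fun v => Real.exp (-(b ^ 2) * v ^ 2) / v ^ 2) MeasureTheory.volume α₀ η := by
    apply ContinuousOn.intervalIntegrable
    rw [Set.uIcc_of_le hη]
    exact ((Real.continuous_exp.comp ((continuous_const.mul (continuous_pow 2)))).continuousOn).div
      (continuous_pow 2).continuousOn
      (fun x hx => by have : 0 < x := hα.trans_le hx.1; positivity)
  have := intervalIntegral.integral_eq_sub_of_hasDerivAt hGderiv hfint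
  rw [this, hG]
  ring

theorem stmt3 (a α₀ ξ Nm NM Lm LM : ℝ) (u N L : ℝ → ℝ)
    (ha : 0 < a) (hα : 0 < α₀) (hαξ : α₀ < ξ)
    (hNm : 0 < Nm) (hNM : Nm ≤ NM) (hLm : 0 < Lm) (hLM : Lm ≤ LM)
    (hu : ContinuousOn u (Icc α₀ ξ)) (hN : Continuous N) (hL : Continuous L)
    (hNb : ∀ x, Nm ≤ N x ∧ N x ≤ NM) (hLb : ∀ x, Lm ≤ L x ∧ L x ≤ LM)
    (E₁ χ₁ h : ℝ → ℝ)
    (hE₁ : ∀ η, E₁ η = Real.exp (-2 * a ^ 2 * ∫ v in α₀..η, v * N (u v) / L (u v)))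
    (hχ₁ : ∀ η, χ₁ η = ∫ v in α₀..η, E₁ v / (v ^ 2 * L (u v)))
    (hh : ∀ η, h η =
      Real.sqrt π * erf (a * Real.sqrt (Nm / LM) * α₀) -
      Real.sqrt π * erf (a * Real.sqrt (Nm / LM) * η) +
      Real.sqrt LM / (a * Real.sqrt Nm * α₀) * Real.exp (-a ^ 2 * (Nm / LM) * α₀ ^ 2) -
      Real.sqrt LM / (a * Real.sqrt Nm * η) * Real.exp (-a ^ 2 * (Nm / LM) * η ^ 2)) :
    ∀ η ∈ Icc α₀ ξ,
      χ₁ η ≤ a * Real.exp (a ^ 2 * (Nm / LM) * α₀ ^ 2) / Lm *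
        Real.sqrt (Nm / LM) * h η := by
  intro η hη
  obtain ⟨hηl, hηr⟩ := hη
  have hLMpos : 0 < LM := hLm.trans_le hLM
  have hk : 0 < Nm / LM := div_pos hNm hLMpos
  have hbpos : 0 < a * Real.sqrt (Nm / LM) := mul_pos ha (Real.sqrt_pos.mpr hk)
  set b : ℝ := a * Real.sqrt (Nm / LM) with hbdef
  have hb2 : b ^ 2 = a ^ 2 * (Nm / LM) := by
    rw [hbdef, mul_pow, Real.sq_sqrt hk.le]
  have hIcc : Icc α₀ η ⊆ Icc α₀ ξ := Icc_subset_Icc le_rfl hηr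
  have hLpos : ∀ w, 0 < L w := fun w => hLm.trans_le (hLb w).1
  -- continuity of the inner integrand
  have hgc : ContinuousOn (fun w => w * N (u w) / L (u w)) (Icc α₀ ξ) :=
    (continuousOn_id.mul (hN.comp_continuousOn hu)).div (hL.comp_continuousOn hu)
      (fun w _ => (hLpos (u w)).ne')
  -- pointwise bound on E₁
  have hE₁le : ∀ v ∈ Icc α₀ η,
      E₁ v ≤ Real.exp (b ^ 2 * α₀ ^ 2) * Real.exp (-(b ^ 2) * v ^ 2) := by
    intro v hv
    have hαv : α₀ ≤ v := hv.1
    have hsub : Icc α₀ v ⊆ Icc α₀ ξ := Icc_subset_Icc le_rfl ((hIcc hv).2)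
    have hint1 : IntervalIntegrable (fun w => Nm / LM * w) MeasureTheory.volume α₀ v :=
      (continuous_const.mul continuous_id).intervalIntegrable _ _
    have hint2 : IntervalIntegrable (fun w => w * N (u w) / L (u w))
        MeasureTheory.volume α₀ v := by
      apply ContinuousOn.intervalIntegrable
      rw [Set.uIcc_of_le hαv]
      exact hgc.mono hsub
    have hmono : (∫ w in α₀..v, Nm / LM * w) ≤ ∫ w in α₀..v, w * N (u w) / L (u w) := by
      apply intervalIntegral.integral_mono_on hαv hint1 hint2
      intro w hw
      have hw0 : 0 < w := hα.trans_le hw.1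
      have hNL : Nm / LM ≤ N (u w) / L (u w) :=
        div_le_div₀ (hNm.trans_le (hNb (u w)).1).le (hNb (u w)).1 (hLpos (u w))
          (hLb (u w)).2
      calc Nm / LM * w = w * (Nm / LM) := mul_comm _ _
        _ ≤ w * (N (u w) / L (u w)) := mul_le_mul_of_nonneg_left hNL hw0.le
        _ = w * N (u w) / L (u w) := (mul_div_assoc _ _ _).symm
    rw [integral_const_mul, integral_id] at hmono
    rw [hE₁ v, ← Real.exp_add]
    apply Real.exp_le_exp.mpr
    have hprod := mul_le_mul_of_nonneg_left hmono (by positivity : (0:ℝ) ≤ 2 * a ^ 2)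
    nlinarith [hb2, hprod]
  -- integrability of the χ₁ integrand
  have hFc : ContinuousOn (fun x => ∫ w in α₀..x, w * N (u w) / L (u w)) (Icc α₀ ξ) := by
    have h' := continuousOn_primitive_interval
      (f := fun w => w * N (u w) / L (u w)) (a := α₀) (b := ξ)
      (μ := MeasureTheory.volume) ?_
    · rwa [Set.uIcc_of_le hαξ.le] at h'
    · rw [Set.uIcc_of_le hαξ.le]
      exact hgc.integrableOn_Icc
  have hE₁c : ContinuousOn E₁ (Icc α₀ ξ) := by
    have hfun : E₁ = fun x => Real.exp (-2 * a ^ 2 * ∫ w in α₀..x, w * N (u w) / L (u w)) :=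
      funext hE₁
    rw [hfun]
    exact Real.continuous_exp.comp_continuousOn (continuousOn_const.mul hFc)
  have hLHSint : IntervalIntegrable (fun v => E₁ v / (v ^ 2 * L (u v)))
      MeasureTheory.volume α₀ η := by
    apply ContinuousOn.intervalIntegrable
    rw [Set.uIcc_of_le hηl]
    apply ContinuousOn.div
    · exact hE₁c.mono hIcc
    · exact (continuous_pow 2).continuousOn.mul (hL.comp_continuousOn (hu.mono hIcc))
    · intro x hx
      have hx0 : 0 < x := hα.trans_le hx.1
      exact (mul_pos (pow_pos hx0 2) (hLpos (u x))).ne'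
  set C0 : ℝ := Real.exp (b ^ 2 * α₀ ^ 2) / Lm with hC0def
  have hφint : IntervalIntegrable (fun v => C0 * (Real.exp (-(b ^ 2) * v ^ 2) / v ^ 2))
      MeasureTheory.volume α₀ η := by
    apply ContinuousOn.intervalIntegrable
    rw [Set.uIcc_of_le hηl]
    apply continuousOn_const.mul
    exact ((Real.continuous_exp.comp (continuous_const.mul (continuous_pow 2))).continuousOn).div
      (continuous_pow 2).continuousOn
      (fun x hx => by have : 0 < x := hα.trans_le hx.1; positivity)
  have hstep : χ₁ η ≤ ∫ v in α₀..η, C0 * (Real.exp (-(b ^ 2) * v ^ 2) / v ^ 2) := by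
    rw [hχ₁]
    apply intervalIntegral.integral_mono_on hηl hLHSint hφint
    intro v hv
    have hv0 : 0 < v := hα.trans_le hv.1
    have hL0 : 0 < L (u v) := hLpos (u v)
    have h1 : E₁ v / (v ^ 2 * L (u v)) ≤
        Real.exp (b ^ 2 * α₀ ^ 2) * Real.exp (-(b ^ 2) * v ^ 2) / (v ^ 2 * Lm) :=
      div_le_div₀ (by positivity) (hE₁le v hv) (by positivity)
        (mul_le_mul_of_nonneg_left (hLb (u v)).1 (by positivity))
    refine h1.trans_eq ?_
    rw [hC0def]
    field_simp
  refine hstep.trans_eq ?_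
  rw [intervalIntegral.integral_const_mul, key_integral b α₀ η hbpos hα hηl, hh]
  -- algebraic identities
  have hNmpos : (0:ℝ) < Real.sqrt Nm := Real.sqrt_pos.mpr hNm
  have hLMs : (0:ℝ) < Real.sqrt LM := Real.sqrt_pos.mpr hLMpos
  have hbb : b * Real.sqrt LM = a * Real.sqrt Nm := by
    rw [hbdef, mul_assoc, ← Real.sqrt_mul hk.le, div_mul_cancel₀ _ hLMpos.ne']
  have hη0 : (0:ℝ) < η := hα.trans_le hηl
  have h5 : Real.sqrt LM / (a * Real.sqrt Nm * α₀) = 1 / (b * α₀) := by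
    rw [← hbb]; field_simp
  have h6 : Real.sqrt LM / (a * Real.sqrt Nm * η) = 1 / (b * η) := by
    rw [← hbb]; field_simp
  have e1 : (-a ^ 2 * (Nm / LM) * α₀ ^ 2 : ℝ) = -(b ^ 2) * α₀ ^ 2 := by rw [hb2]; ring
  have e2 : (-a ^ 2 * (Nm / LM) * η ^ 2 : ℝ) = -(b ^ 2) * η ^ 2 := by rw [hb2]; ring
  have e3 : (a ^ 2 * (Nm / LM) * α₀ ^ 2 : ℝ) = b ^ 2 * α₀ ^ 2 := by rw [hb2]
  have hco : a * Real.exp (b ^ 2 * α₀ ^ 2) / Lm * Real.sqrt (Nm / LM) =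
      b * Real.exp (b ^ 2 * α₀ ^ 2) / Lm := by rw [hbdef]; ring
  rw [e1, e2, e3, h5, h6, hco, hC0def]
  field_simp
end

section
/- Suppose $u_2$ is continuous on $[\xi, \infty)$, $N, L$ satisfy the positive bounds $N_m \leq N \leq N_M$, $L_m \leq L \leq L_M$, and $K(u_2(s)) \leq K_M e^{-Rs^2}$ with $R \geq a^2 N_M / L_m$. Then the function $\Phi_2(\eta) = \frac{k^2}{16a^2\pi^2}\int_{\xi}^{\eta} \frac{E_2(v)}{v^2 L(u_2(v))} \int_{\xi}^{v} \frac{K(u_2(s))}{s^2 E_2(s)} ds\, dv$ satisfies $\Phi_2(\eta) \leq \frac{k^2 K_M}{16 a^2 \pi^2 L_m \xi^2}$ for all $\eta \geq \xi$, where $E_2(\eta) = \exp(-2a^2\int_{\xi}^{\eta} v\, N(u_2(v))/L(u_2(v))\, dv)$. -/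
open Real Set intervalIntegral

/-- Auxiliary: `∫ s in ξ..v, c / s ^ 2 ≤ c / ξ` for `0 < ξ ≤ v`, `0 ≤ c`. -/
lemma aux_int_sq (c ξ v : ℝ) (hξ : 0 < ξ) (hv : ξ ≤ v) (hc : 0 ≤ c) :
    ∫ s in ξ..v, c / s ^ 2 ≤ c / ξ := by
  have h0 : (0:ℝ) ∉ Set.uIcc ξ v := by
    rw [uIcc_of_le hv]
    exact fun h => absurd h.1 (not_le.2 hξ)
  have h1 : Set.EqOn (fun s => c / s ^ 2) (fun s => c * s ^ (-2 : ℤ)) (Set.uIcc ξ v) := by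
    intro s hs
    rw [uIcc_of_le hv] at hs
    have hs0 : s ≠ 0 := (lt_of_lt_of_le hξ hs.1).ne'
    simp only [zpow_neg]
    rw [← zpow_natCast s 2]
    norm_num [div_eq_mul_inv]
  rw [intervalIntegral.integral_congr h1, intervalIntegral.integral_const_mul,
    integral_zpow (Or.inr ⟨by norm_num, h0⟩)]
  have hv0 : 0 < v := lt_of_lt_of_le hξ hv
  have he : ((v : ℝ) ^ ((-2 : ℤ) + 1) - ξ ^ ((-2 : ℤ) + 1)) / (((-2 : ℤ) : ℝ) + 1)
      = ξ⁻¹ - v⁻¹ := by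
    norm_num
    ring
  rw [he]
  have hvinv : 0 ≤ v⁻¹ := by positivity
  have hle : c * (ξ⁻¹ - v⁻¹) ≤ c * ξ⁻¹ := by nlinarith
  calc c * (ξ⁻¹ - v⁻¹) ≤ c * ξ⁻¹ := hle
    _ = c / ξ := by rw [div_eq_mul_inv]

theorem stmt5 (a k ξ Nm NM Lm LM Km KM R : ℝ) (u₂ N L K : ℝ → ℝ)
    (ha : 0 < a) (hk : 0 < k) (hξ : 0 < ξ)
    (hNm : 0 < Nm) (hNM : Nm ≤ NM) (hLm : 0 < Lm) (hLM : Lm ≤ LM) (hKM : 0 < KM)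
    (hR : a ^ 2 * NM / Lm ≤ R)
    (hu : ContinuousOn u₂ (Ici ξ))
    (hN : Continuous N) (hL : Continuous L) (hKc : Continuous K)
    (hNb : ∀ x, Nm ≤ N x ∧ N x ≤ NM) (hLb : ∀ x, Lm ≤ L x ∧ L x ≤ LM)
    (hKb : ∀ s, s ∈ Ici ξ → 0 ≤ K (u₂ s) ∧ K (u₂ s) ≤ KM * Real.exp (-R * s ^ 2))
    (E₂ Φ₂ : ℝ → ℝ)
    (hE₂ : ∀ η, E₂ η = Real.exp (-2 * a ^ 2 * ∫ v in ξ..η, v * N (u₂ v) / L (u₂ v)))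
    (hΦ₂ : ∀ η, Φ₂ η = k ^ 2 / (16 * a ^ 2 * π ^ 2) *
      ∫ v in ξ..η, E₂ v / (v ^ 2 * L (u₂ v)) * ∫ s in ξ..v, K (u₂ s) / (s ^ 2 * E₂ s)) :
    ∀ η, ξ ≤ η → Φ₂ η ≤ k ^ 2 * KM / (16 * a ^ 2 * π ^ 2 * Lm * ξ ^ 2) := by
  intro η hη
  have hπ : 0 < π := Real.pi_pos
  have hLpos : ∀ x, 0 < L x := fun x => lt_of_lt_of_le hLm (hLb x).1
  have hNpos : ∀ x, 0 < N x := fun x => lt_of_lt_of_le hNm (hNb x).1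
  have hE2pos : ∀ x, 0 < E₂ x := fun x => by rw [hE₂]; exact Real.exp_pos _
  have hNMpos : 0 < NM := lt_of_lt_of_le hNm hNM
  have hRpos : 0 < R :=
    lt_of_lt_of_le (div_pos (mul_pos (pow_pos ha 2) hNMpos) hLm) hR
  -- the exponent integrand
  set f : ℝ → ℝ := fun t => t * N (u₂ t) / L (u₂ t) with hf
  have hfc : ContinuousOn f (Ici ξ) :=
    (continuousOn_id.mul (hN.comp_continuousOn hu)).div (hL.comp_continuousOn hu)
      (fun x _ => (hLpos _).ne')
  have hfint : ∀ s v, ξ ≤ s → ξ ≤ v → IntervalIntegrable f MeasureTheory.volume s v := by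
    intro s v hs hv
    exact (hfc.mono (fun x hx => le_trans (le_min hs hv) hx.1)).intervalIntegrable
  have hfnn : ∀ t, ξ ≤ t → 0 ≤ f t := by
    intro t ht
    have h1 := hNpos (u₂ t)
    have h2 := hLpos (u₂ t)
    have ht0 : 0 < t := lt_of_lt_of_le hξ ht
    exact div_nonneg (mul_nonneg ht0.le h1.le) h2.le
  -- monotonicity of E₂
  have hE2mono : ∀ s v, ξ ≤ s → s ≤ v → E₂ v ≤ E₂ s := by
    intro s v hs hsv
    rw [hE₂, hE₂, Real.exp_le_exp]
    have h1 : (∫ t in ξ..s, f t) + ∫ t in s..v, f t = ∫ t in ξ..v, f t :=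
      intervalIntegral.integral_add_adjacent_intervals (hfint ξ s le_rfl hs)
        (hfint s v hs (hs.trans hsv))
    have h2 : 0 ≤ ∫ t in s..v, f t :=
      intervalIntegral.integral_nonneg hsv (fun t ht => hfnn t (hs.trans ht.1))
    nlinarith [sq_nonneg a, mul_nonneg (sq_nonneg a) h2]
  -- continuity of E₂ on Icc ξ η
  have hsub : Icc ξ η ⊆ Ici ξ := fun x hx => hx.1
  have hE2c : ContinuousOn E₂ (Icc ξ η) := by
    have hint : MeasureTheory.IntegrableOn f (Set.uIcc ξ η) MeasureTheory.volume := by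
      rw [uIcc_of_le hη]
      exact (hfc.mono hsub).integrableOn_Icc
    have hP : ContinuousOn (fun x => ∫ t in ξ..x, f t) (Icc ξ η) := by
      have := intervalIntegral.continuousOn_primitive_interval hint
      rwa [uIcc_of_le hη] at this
    have : ContinuousOn (fun x => Real.exp (-2 * a ^ 2 * ∫ t in ξ..x, f t)) (Icc ξ η) :=
      Real.continuous_exp.comp_continuousOn (continuousOn_const.mul hP)
    exact this.congr (fun x _ => hE₂ x)
  -- the inner integrand
  set g₁ : ℝ → ℝ := fun s => K (u₂ s) / (s ^ 2 * E₂ s) with hg₁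
  have hg₁c : ContinuousOn g₁ (Icc ξ η) := by
    refine ((hKc.comp_continuousOn (hu.mono hsub)).div
      (((continuousOn_id.pow 2)).mul hE2c) ?_)
    intro x hx
    have hx0 : 0 < x := lt_of_lt_of_le hξ hx.1
    have := hE2pos x
    positivity
  set I : ℝ → ℝ := fun v => ∫ s in ξ..v, g₁ s with hI
  have hIc : ContinuousOn I (Icc ξ η) := by
    have hint : MeasureTheory.IntegrableOn g₁ (Set.uIcc ξ η) MeasureTheory.volume := by
      rw [uIcc_of_le hη]
      exact hg₁c.integrableOn_Icc
    have := intervalIntegral.continuousOn_primitive_interval hint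
    rwa [uIcc_of_le hη] at this
  -- key inner bound
  have hIbound : ∀ v ∈ Icc ξ η, E₂ v * I v ≤ KM / ξ := by
    intro v hv
    have hv0 : 0 < v := lt_of_lt_of_le hξ hv.1
    have h1 : E₂ v * I v = ∫ s in ξ..v, E₂ v * g₁ s :=
      (intervalIntegral.integral_const_mul _ _).symm
    rw [h1]
    have hint1 : IntervalIntegrable (fun s => E₂ v * g₁ s) MeasureTheory.volume ξ v := by
      refine ((hg₁c.mono ?_).intervalIntegrable).const_mul _
      rw [uIcc_of_le hv.1]
      exact Icc_subset_Icc le_rfl hv.2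
    have hint2 : IntervalIntegrable (fun s => KM / s ^ 2) MeasureTheory.volume ξ v := by
      refine ContinuousOn.intervalIntegrable ?_
      refine continuousOn_const.div (continuousOn_id.pow 2) ?_
      intro x hx
      rw [uIcc_of_le hv.1] at hx
      have : 0 < x := lt_of_lt_of_le hξ hx.1
      positivity
    have h2 : (∫ s in ξ..v, E₂ v * g₁ s) ≤ ∫ s in ξ..v, KM / s ^ 2 := by
      refine intervalIntegral.integral_mono_on hv.1 hint1 hint2 ?_
      intro s hs
      have hs0 : 0 < s := lt_of_lt_of_le hξ hs.1
      have hEs := hE2pos s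
      have hK0 := (hKb s hs.1).1
      have hK1 : K (u₂ s) ≤ KM := by
        have := (hKb s hs.1).2
        have hexp : Real.exp (-R * s ^ 2) ≤ 1 := by
          rw [Real.exp_le_one_iff]
          nlinarith
        nlinarith
      have hnum : E₂ v * K (u₂ s) ≤ KM * E₂ s := by
        have hm : E₂ v ≤ E₂ s := hE2mono s v hs.1 hs.2
        nlinarith [hE2pos v]
      have heq : E₂ v * g₁ s = (E₂ v * K (u₂ s)) / (s ^ 2 * E₂ s) := by
        simp only [hg₁]
        rw [mul_div_assoc']
      rw [heq]
      have heq2 : KM / s ^ 2 = (KM * E₂ s) / (s ^ 2 * E₂ s) := by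
        rw [mul_comm (s ^ 2), ← div_div, mul_div_assoc]
        rw [div_self hEs.ne', mul_one]
      rw [heq2]
      have hden : (0:ℝ) < s ^ 2 * E₂ s := mul_pos (pow_pos hs0 2) hEs
      gcongr
    exact h2.trans (aux_int_sq KM ξ v hξ hv.1 hKM.le)
  -- pointwise bound on the outer integrand
  have hInn : ∀ v ∈ Icc ξ η, 0 ≤ I v := by
    intro v hv
    refine intervalIntegral.integral_nonneg hv.1 ?_
    intro s hs
    have hs0 : 0 < s := lt_of_lt_of_le hξ hs.1
    have := hE2pos s
    exact div_nonneg (hKb s hs.1).1 (by positivity)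
  have houter : ∀ v ∈ Icc ξ η,
      E₂ v / (v ^ 2 * L (u₂ v)) * I v ≤ (KM / (ξ * Lm)) / v ^ 2 := by
    intro v hv
    have hv0 : 0 < v := lt_of_lt_of_le hξ hv.1
    have heq : E₂ v / (v ^ 2 * L (u₂ v)) * I v = (E₂ v * I v) / (v ^ 2 * L (u₂ v)) := by
      rw [div_mul_eq_mul_div]
    rw [heq]
    have h1 : (E₂ v * I v) / (v ^ 2 * L (u₂ v)) ≤ (KM / ξ) / (v ^ 2 * Lm) := by
      apply div_le_div₀ (by positivity) (hIbound v hv) (by positivity)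
      exact mul_le_mul_of_nonneg_left (hLb _).1 (by positivity)
    have h2 : (KM / ξ) / (v ^ 2 * Lm) = (KM / (ξ * Lm)) / v ^ 2 := by
      rw [div_div, div_div]
      ring_nf
    rw [h2] at h1
    exact h1
  -- assemble
  rw [hΦ₂]
  have hgc : ContinuousOn (fun v => E₂ v / (v ^ 2 * L (u₂ v)) * I v) (Icc ξ η) := by
    refine (hE2c.div ((continuousOn_id.pow 2).mul
      (hL.comp_continuousOn (hu.mono hsub))) ?_).mul hIc
    intro x hx
    have : 0 < x := lt_of_lt_of_le hξ hx.1
    have := hLpos (u₂ x)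
    exact (mul_pos (pow_pos ‹0 < x› 2) (hLpos (u₂ x))).ne'
  have hBint : IntervalIntegrable (fun v => (KM / (ξ * Lm)) / v ^ 2)
      MeasureTheory.volume ξ η := by
    refine ContinuousOn.intervalIntegrable ?_
    refine continuousOn_const.div (continuousOn_id.pow 2) ?_
    intro x hx
    rw [uIcc_of_le hη] at hx
    have : 0 < x := lt_of_lt_of_le hξ hx.1
    positivity
  have hmain : (∫ v in ξ..η, E₂ v / (v ^ 2 * L (u₂ v)) * I v)
      ≤ ∫ v in ξ..η, (KM / (ξ * Lm)) / v ^ 2 := by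
    refine intervalIntegral.integral_mono_on hη ?_ hBint houter
    exact (hgc.mono (by rw [uIcc_of_le hη])).intervalIntegrable
  have hfin : (∫ v in ξ..η, (KM / (ξ * Lm)) / v ^ 2) ≤ (KM / (ξ * Lm)) / ξ :=
    aux_int_sq _ ξ η hξ hη (by positivity)
  have hC : (0:ℝ) < k ^ 2 / (16 * a ^ 2 * π ^ 2) := by positivity
  calc k ^ 2 / (16 * a ^ 2 * π ^ 2) *
        ∫ v in ξ..η, E₂ v / (v ^ 2 * L (u₂ v)) * I v
      ≤ k ^ 2 / (16 * a ^ 2 * π ^ 2) * ((KM / (ξ * Lm)) / ξ) :=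
        mul_le_mul_of_nonneg_left (hmain.trans hfin) hC.le
    _ = k ^ 2 * KM / (16 * a ^ 2 * π ^ 2 * Lm * ξ ^ 2) := by
        field_simp
end

section
/- Under the Lipschitz and boundedness assumptions on $N$ and $L$, for continuous $u, u^*$ on $[\alpha_0, \xi]$ and $\eta \in [\alpha_0, \xi]$: $|\chi_1(\eta; u) - \chi_1(\eta; u^*)| \leq \left[\frac{a^2}{L_m}\left(\frac{\widetilde{N}}{L_m} + \frac{N_M\widetilde{L}}{L_m^2}\right)\left(\eta + \frac{\alpha_0^2}{\eta} - 2\alpha_0\right) + \frac{\widetilde{L}}{L_m^2}\left(\frac{1}{\alpha_0} - \frac{1}{\eta}\right)\right]\|u - u^*\|_\infty$, where $\chi_1(\eta; u) = \int_{\alpha_0}^{\eta} \frac{E_1(v; u)}{v^2 L(u(v))} dv$ and $E_1(\eta; u) = \exp(-2a^2\int_{\alpha_0}^{\eta} v\,N(u(v))/L(u(v))\,dv)$. -/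
open Real Set intervalIntegral

private lemma exp_diff_abs_le {X Y : ℝ} (hX : X ≤ 0) (hY : Y ≤ 0) :
    |Real.exp X - Real.exp Y| ≤ |X - Y| := by
  have key : ∀ P Q : ℝ, P ≤ Q → Q ≤ 0 → Real.exp Q - Real.exp P ≤ Q - P := by
    intro P Q hPQ hQ
    have h1 := Real.add_one_le_exp (P - Q)
    have h2 : Real.exp Q ≤ 1 := Real.exp_le_one_iff.2 hQ
    have h3 : Real.exp Q * Real.exp (P - Q) = Real.exp P := by
      rw [← Real.exp_add]; ring_nf
    nlinarith [Real.exp_pos Q]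
  rcases le_total X Y with h | h
  · rw [abs_sub_comm, abs_of_nonneg (sub_nonneg.2 (Real.exp_le_exp.2 h)),
      abs_sub_comm X, abs_of_nonneg (sub_nonneg.2 h)]
    exact key X Y h hY
  · rw [abs_of_nonneg (sub_nonneg.2 (Real.exp_le_exp.2 h)),
      abs_of_nonneg (sub_nonneg.2 h)]
    exact key Y X h hX

private lemma div_sub_div_abs_le {A B P Q c B0 : ℝ} (hc : 0 < c) (hP : c ≤ P) (hQ : c ≤ Q)
    (hB0 : 0 ≤ B) (hB : B ≤ B0) :
    |A / P - B / Q| ≤ |A - B| / c + B0 * |P - Q| / c ^ 2 := by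
  have hP0 : 0 < P := hc.trans_le hP
  have hQ0 : 0 < Q := hc.trans_le hQ
  calc |A / P - B / Q| ≤ |A / P - B / P| + |B / P - B / Q| := abs_sub_le _ _ _
    _ = |A - B| / P + B * |P - Q| / (P * Q) := by
        rw [div_sub_div_same, abs_div, abs_of_pos hP0,
          div_sub_div _ _ hP0.ne' hQ0.ne', abs_div, abs_of_pos (mul_pos hP0 hQ0)]
        congr 1
        rw [show B * Q - P * B = B * (Q - P) by ring, abs_mul, abs_of_nonneg hB0,
          abs_sub_comm]
    _ ≤ |A - B| / c + B0 * |P - Q| / c ^ 2 := by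
        have e1 : |A - B| / P ≤ |A - B| / c := by
          rw [div_le_div_iff₀ hP0 hc]
          nlinarith [abs_nonneg (A - B)]
        have e2 : B * |P - Q| / (P * Q) ≤ B0 * |P - Q| / c ^ 2 := by
          rw [div_le_div_iff₀ (mul_pos hP0 hQ0) (pow_pos hc 2)]
          have h1 : B * |P - Q| ≤ B0 * |P - Q| :=
            mul_le_mul_of_nonneg_right hB (abs_nonneg _)
          have h2 : c * c ≤ P * Q := mul_le_mul hP hQ hc.le hP0.le
          have hX0 : 0 ≤ B * |P - Q| := mul_nonneg hB0 (abs_nonneg _)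
          have hY0 : 0 ≤ B0 * |P - Q| := hX0.trans h1
          nlinarith
        exact add_le_add e1 e2

set_option maxHeartbeats 1000000 in
theorem stmt8 (a α₀ ξ Nm NM Lm LM Nt Lt : ℝ) (u ustar N L : ℝ → ℝ)
    (ha : 0 < a) (hα : 0 < α₀) (hαξ : α₀ < ξ)
    (hNm : 0 < Nm) (hNM : Nm ≤ NM) (hLm : 0 < Lm) (hLM : Lm ≤ LM)
    (hNt : 0 ≤ Nt) (hLt : 0 ≤ Lt)
    (hNb : ∀ x, Nm ≤ N x ∧ N x ≤ NM) (hLb : ∀ x, Lm ≤ L x ∧ L x ≤ LM)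
    (hNlip : ∀ x y, |N x - N y| ≤ Nt * |x - y|)
    (hLlip : ∀ x y, |L x - L y| ≤ Lt * |x - y|)
    (hu : ContinuousOn u (Icc α₀ ξ)) (hustar : ContinuousOn ustar (Icc α₀ ξ))
    (E₁ χ₁ : (ℝ → ℝ) → ℝ → ℝ)
    (hE₁ : ∀ w η, E₁ w η = Real.exp (-2 * a ^ 2 * ∫ v in α₀..η, v * N (w v) / L (w v)))
    (hχ₁ : ∀ w η, χ₁ w η = ∫ v in α₀..η, E₁ w v / (v ^ 2 * L (w v))) :
    ∀ η ∈ Icc α₀ ξ,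
      |χ₁ u η - χ₁ ustar η| ≤
        (a ^ 2 / Lm * (Nt / Lm + NM * Lt / Lm ^ 2) * (η + α₀ ^ 2 / η - 2 * α₀) +
          Lt / Lm ^ 2 * (1 / α₀ - 1 / η)) *
          ⨆ v : Icc α₀ ξ, |u v - ustar v| := by
  intro η hη
  obtain ⟨hαη, hηξ⟩ := hη
  have hη0 : 0 < η := hα.trans_le hαη
  -- continuity of N and L
  have hNc : Continuous N := by
    refine (LipschitzWith.of_dist_le_mul (K := Real.toNNReal Nt) fun x y => ?_).continuous
    rw [Real.dist_eq, Real.dist_eq, Real.coe_toNNReal _ hNt]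
    exact hNlip x y
  have hLc : Continuous L := by
    refine (LipschitzWith.of_dist_le_mul (K := Real.toNNReal Lt) fun x y => ?_).continuous
    rw [Real.dist_eq, Real.dist_eq, Real.coe_toNNReal _ hLt]
    exact hLlip x y
  have hLpos : ∀ x, 0 < L x := fun x => hLm.trans_le (hLb x).1
  have hNpos : ∀ x, 0 < N x := fun x => hNm.trans_le (hNb x).1
  -- the sup norm
  set M := ⨆ v : Icc α₀ ξ, |u v - ustar v| with hMdef
  have hbdd : BddAbove (range fun v : Icc α₀ ξ => |u v - ustar v|) := by
    obtain ⟨C, hC⟩ := (isCompact_Icc (a := α₀) (b := ξ)).exists_bound_of_continuousOn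
      (hu.sub hustar)
    exact ⟨C, forall_mem_range.2 fun v => by
      simpa [Real.norm_eq_abs] using hC v v.2⟩
  have hMle : ∀ v ∈ Icc α₀ ξ, |u v - ustar v| ≤ M := fun v hv =>
    le_ciSup hbdd (⟨v, hv⟩ : Icc α₀ ξ)
  have hM0 : 0 ≤ M := (abs_nonneg _).trans (hMle α₀ ⟨le_refl _, hαξ.le⟩)
  -- the Lipschitz constant for N/L
  set C' := Nt / Lm + NM * Lt / Lm ^ 2 with hC'def
  have hNM0 : 0 ≤ NM := (hNm.trans_le hNM).le
  have hC'0 : 0 ≤ C' := by positivity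
  have ratio : ∀ x y : ℝ, |N x / L x - N y / L y| ≤ C' * |x - y| := by
    intro x y
    have h := div_sub_div_abs_le (A := N x) (B := N y) (P := L x) (Q := L y)
      hLm (hLb x).1 (hLb y).1 (hNpos y).le (hNb y).2
    refine h.trans ?_
    have h1 : |N x - N y| / Lm ≤ Nt * |x - y| / Lm := by gcongr; exact hNlip x y
    have h2 : NM * |L x - L y| / Lm ^ 2 ≤ NM * (Lt * |x - y|) / Lm ^ 2 := by
      gcongr
      exact hLlip x y
    calc |N x - N y| / Lm + NM * |L x - L y| / Lm ^ 2
        ≤ Nt * |x - y| / Lm + NM * (Lt * |x - y|) / Lm ^ 2 := add_le_add h1 h2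
      _ = C' * |x - y| := by rw [hC'def]; ring
  -- inner integrand continuity
  have hgc : ∀ w : ℝ → ℝ, ContinuousOn w (Icc α₀ ξ) →
      ContinuousOn (fun t => t * N (w t) / L (w t)) (Icc α₀ ξ) := fun w hw =>
    (continuousOn_id.mul (hNc.comp_continuousOn hw)).div
      (hLc.comp_continuousOn hw) (fun t _ => (hLpos _).ne')
  have hgint : ∀ w : ℝ → ℝ, ContinuousOn w (Icc α₀ ξ) → ∀ v ∈ Icc α₀ ξ,
      IntervalIntegrable (fun t => t * N (w t) / L (w t)) MeasureTheory.volume α₀ v := by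
    intro w hw v hv
    refine ContinuousOn.intervalIntegrable ((hgc w hw).mono ?_)
    rw [uIcc_of_le hv.1]
    exact Icc_subset_Icc le_rfl hv.2
  -- inner integral nonneg
  have hFnn : ∀ w : ℝ → ℝ, ∀ v ∈ Icc α₀ ξ,
      0 ≤ ∫ t in α₀..v, t * N (w t) / L (w t) := by
    intro w v hv
    refine intervalIntegral.integral_nonneg hv.1 fun t ht => ?_
    have ht0 : 0 < t := hα.trans_le ht.1
    have := hNpos (w t)
    have := hLpos (w t)
    positivity
  have hE₁pos : ∀ w v, 0 < E₁ w v := fun w v => by rw [hE₁]; exact Real.exp_pos _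
  have hE₁le1 : ∀ (w : ℝ → ℝ), ∀ v ∈ Icc α₀ ξ, E₁ w v ≤ 1 := by
    intro w v hv
    rw [hE₁]
    refine Real.exp_le_one_iff.2 ?_
    have := hFnn w v hv
    nlinarith
  -- E₁ continuity
  have hE₁c : ∀ (w : ℝ → ℝ), ContinuousOn w (Icc α₀ ξ) →
      ContinuousOn (E₁ w) (Icc α₀ ξ) := by
    intro w hw
    rw [show E₁ w = fun v => Real.exp (-2 * a ^ 2 * ∫ t in α₀..v, t * N (w t) / L (w t))
      from funext (hE₁ w)]
    have h1 : ContinuousOn (fun v => ∫ t in α₀..v, t * N (w t) / L (w t)) (Icc α₀ ξ) := by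
      have h2 := intervalIntegral.continuousOn_primitive_interval
        (f := fun t => t * N (w t) / L (w t)) (a := α₀) (b := ξ)
        (μ := MeasureTheory.volume) (by
          rw [uIcc_of_le hαξ.le]
          exact (hgc w hw).integrableOn_Icc)
      rwa [uIcc_of_le hαξ.le] at h2
    exact Real.continuous_exp.comp_continuousOn (continuousOn_const.mul h1)
  -- E₁ difference bound
  have hE₁diff : ∀ v ∈ Icc α₀ ξ,
      |E₁ u v - E₁ ustar v| ≤ a ^ 2 * C' * M * (v ^ 2 - α₀ ^ 2) := by
    intro v hv
    rw [hE₁, hE₁]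
    have hXu : -2 * a ^ 2 * ∫ t in α₀..v, t * N (u t) / L (u t) ≤ 0 := by
      have := hFnn u v hv; nlinarith
    have hXs : -2 * a ^ 2 * ∫ t in α₀..v, t * N (ustar t) / L (ustar t) ≤ 0 := by
      have := hFnn ustar v hv; nlinarith
    refine (exp_diff_abs_le hXu hXs).trans ?_
    rw [show (-2 * a ^ 2 * ∫ t in α₀..v, t * N (u t) / L (u t)) -
        (-2 * a ^ 2 * ∫ t in α₀..v, t * N (ustar t) / L (ustar t)) =
        (-(2 * a ^ 2)) * ((∫ t in α₀..v, t * N (u t) / L (u t)) -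
          ∫ t in α₀..v, t * N (ustar t) / L (ustar t)) by ring,
      abs_mul, abs_neg, abs_of_nonneg (by positivity : (0:ℝ) ≤ 2 * a ^ 2)]
    have hiu := hgint u hu v hv
    have his := hgint ustar hustar v hv
    have hdiff : |(∫ t in α₀..v, t * N (u t) / L (u t)) -
        ∫ t in α₀..v, t * N (ustar t) / L (ustar t)| ≤ C' * M * ((v ^ 2 - α₀ ^ 2) / 2) := by
      rw [← intervalIntegral.integral_sub hiu his]
      calc |∫ t in α₀..v, (t * N (u t) / L (u t) - t * N (ustar t) / L (ustar t))|
          ≤ ∫ t in α₀..v, |t * N (u t) / L (u t) - t * N (ustar t) / L (ustar t)| :=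
            intervalIntegral.abs_integral_le_integral_abs hv.1
        _ ≤ ∫ t in α₀..v, t * (C' * M) := by
            refine intervalIntegral.integral_mono_on hv.1 (hiu.sub his).abs
              (by apply Continuous.intervalIntegrable; continuity) fun t ht => ?_
            have ht0 : 0 ≤ t := (hα.trans_le ht.1).le
            have htmem : t ∈ Icc α₀ ξ := ⟨ht.1, ht.2.trans hv.2⟩
            rw [mul_div_assoc, mul_div_assoc, ← mul_sub, abs_mul, abs_of_nonneg ht0]
            refine mul_le_mul_of_nonneg_left ?_ ht0
            refine (ratio (u t) (ustar t)).trans ?_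
            exact mul_le_mul_of_nonneg_left (hMle t htmem) hC'0
        _ = C' * M * ((v ^ 2 - α₀ ^ 2) / 2) := by
            rw [intervalIntegral.integral_mul_const, integral_id]; ring
    calc 2 * a ^ 2 * |(∫ t in α₀..v, t * N (u t) / L (u t)) -
          ∫ t in α₀..v, t * N (ustar t) / L (ustar t)|
        ≤ 2 * a ^ 2 * (C' * M * ((v ^ 2 - α₀ ^ 2) / 2)) :=
          mul_le_mul_of_nonneg_left hdiff (by positivity)
      _ = a ^ 2 * C' * M * (v ^ 2 - α₀ ^ 2) := by ring
  -- outer integrand continuity / integrability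
  have hfc : ∀ (w : ℝ → ℝ), ContinuousOn w (Icc α₀ ξ) →
      ContinuousOn (fun v => E₁ w v / (v ^ 2 * L (w v))) (Icc α₀ ξ) := by
    intro w hw
    refine (hE₁c w hw).div ((continuousOn_id.pow 2).mul (hLc.comp_continuousOn hw))
      fun v hv => ?_
    have hv0 : 0 < v := hα.trans_le hv.1
    have := hLpos (w v)
    positivity
  have hfint : ∀ (w : ℝ → ℝ), ContinuousOn w (Icc α₀ ξ) →
      IntervalIntegrable (fun v => E₁ w v / (v ^ 2 * L (w v))) MeasureTheory.volume α₀ η := by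
    intro w hw
    refine ContinuousOn.intervalIntegrable ((hfc w hw).mono ?_)
    rw [uIcc_of_le hαη]
    exact Icc_subset_Icc le_rfl hηξ
  have hfu := hfint u hu
  have hfs := hfint ustar hustar
  -- the bound function
  set K := a ^ 2 / Lm * C' * M with hKdef
  set D := Lt / Lm ^ 2 * M with hDdef
  have hK0 : 0 ≤ K := by positivity
  -- pointwise bound on the outer integrand difference
  have hb : ∀ v ∈ Icc α₀ η,
      |E₁ u v / (v ^ 2 * L (u v)) - E₁ ustar v / (v ^ 2 * L (ustar v))| ≤
        K + (D - K * α₀ ^ 2) / v ^ 2 := by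
    intro v hv
    have hv0 : 0 < v := hα.trans_le hv.1
    have hvξ : v ∈ Icc α₀ ξ := ⟨hv.1, hv.2.trans hηξ⟩
    have h := div_sub_div_abs_le (A := E₁ u v) (B := E₁ ustar v)
      (P := v ^ 2 * L (u v)) (Q := v ^ 2 * L (ustar v)) (c := v ^ 2 * Lm) (B0 := 1)
      (by positivity)
      (mul_le_mul_of_nonneg_left (hLb (u v)).1 (by positivity))
      (mul_le_mul_of_nonneg_left (hLb (ustar v)).1 (by positivity))
      (hE₁pos ustar v).le (hE₁le1 ustar v hvξ)
    refine h.trans ?_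
    have t1 : |E₁ u v - E₁ ustar v| / (v ^ 2 * Lm) ≤
        a ^ 2 * C' * M * (v ^ 2 - α₀ ^ 2) / (v ^ 2 * Lm) := by
      gcongr
      exact hE₁diff v hvξ
    have t2 : 1 * |v ^ 2 * L (u v) - v ^ 2 * L (ustar v)| / (v ^ 2 * Lm) ^ 2 ≤
        Lt * M / (v ^ 2 * Lm ^ 2) := by
      rw [one_mul, show v ^ 2 * L (u v) - v ^ 2 * L (ustar v) =
        v ^ 2 * (L (u v) - L (ustar v)) by ring, abs_mul,
        abs_of_nonneg (by positivity : (0:ℝ) ≤ v ^ 2)]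
      have hLL : |L (u v) - L (ustar v)| ≤ Lt * M :=
        (hLlip _ _).trans (mul_le_mul_of_nonneg_left (hMle v hvξ) hLt)
      calc v ^ 2 * |L (u v) - L (ustar v)| / (v ^ 2 * Lm) ^ 2
          ≤ v ^ 2 * (Lt * M) / (v ^ 2 * Lm) ^ 2 := by gcongr
        _ = Lt * M / (v ^ 2 * Lm ^ 2) := by
            rw [mul_pow]
            rw [show v ^ 2 * (Lt * M) / ((v ^ 2) ^ 2 * Lm ^ 2) =
              (Lt * M) / (v ^ 2 * Lm ^ 2) * (v ^ 2 / v ^ 2) by ring]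
            rw [div_self (by positivity : (v:ℝ) ^ 2 ≠ 0), mul_one]
    refine (add_le_add t1 t2).trans_eq ?_
    rw [hKdef, hDdef]
    field_simp
    ring
  -- integral of the bound function
  have hbint : IntervalIntegrable (fun v => K + (D - K * α₀ ^ 2) / v ^ 2)
      MeasureTheory.volume α₀ η := by
    refine ContinuousOn.intervalIntegrable ?_
    refine continuousOn_const.add (continuousOn_const.div (continuousOn_id.pow 2)
      fun v hv => ?_)
    rw [uIcc_of_le hαη] at hv
    have : 0 < v := hα.trans_le hv.1
    positivity
  have hbval : (∫ v in α₀..η, (K + (D - K * α₀ ^ 2) / v ^ 2)) =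
      K * (η - α₀) + (D - K * α₀ ^ 2) * (1 / α₀ - 1 / η) := by
    set c := D - K * α₀ ^ 2 with hcdef
    have hderiv : ∀ x ∈ uIcc α₀ η, HasDerivAt (fun y => K * y - c * y⁻¹)
        (K + c / x ^ 2) x := by
      intro x hx
      rw [uIcc_of_le hαη] at hx
      have hx0 : x ≠ 0 := (hα.trans_le hx.1).ne'
      have h1 : HasDerivAt (fun y => K * y - c * y⁻¹)
          (K * 1 - c * (-(x ^ 2)⁻¹)) x :=
        ((hasDerivAt_id x).const_mul K).sub ((hasDerivAt_inv hx0).const_mul c)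
      convert h1 using 1
      field_simp
      ring
    rw [intervalIntegral.integral_eq_sub_of_hasDerivAt hderiv hbint]
    have hα0 : α₀ ≠ 0 := hα.ne'
    have hηne : η ≠ 0 := hη0.ne'
    field_simp
    ring
  -- put everything together
  rw [hχ₁, hχ₁, ← intervalIntegral.integral_sub hfu hfs]
  calc |∫ v in α₀..η, (E₁ u v / (v ^ 2 * L (u v)) - E₁ ustar v / (v ^ 2 * L (ustar v)))|
      ≤ ∫ v in α₀..η, |E₁ u v / (v ^ 2 * L (u v)) - E₁ ustar v / (v ^ 2 * L (ustar v))| :=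
        intervalIntegral.abs_integral_le_integral_abs hαη
    _ ≤ ∫ v in α₀..η, (K + (D - K * α₀ ^ 2) / v ^ 2) :=
        intervalIntegral.integral_mono_on hαη (hfu.sub hfs).abs hbint hb
    _ = K * (η - α₀) + (D - K * α₀ ^ 2) * (1 / α₀ - 1 / η) := hbval
    _ = (a ^ 2 / Lm * (Nt / Lm + NM * Lt / Lm ^ 2) * (η + α₀ ^ 2 / η - 2 * α₀) +
          Lt / Lm ^ 2 * (1 / α₀ - 1 / η)) * M := by
        rw [hKdef, hDdef, hC'def]
        field_simp
        ring
end

section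
/- The function $\mathcal{G}(x) = \sqrt{\pi}\, x\, e^{x^2}(1 - \mathrm{erf}(x))$ is strictly increasing on $(0, \infty)$ and satisfies $0 < \mathcal{G}(x) < 1$ for all $x > 0$, with $\mathcal{G}(x) \to 1$ as $x \to \infty$. -/
open Real Set Filter intervalIntegral

noncomputable def G (x : ℝ) : ℝ :=
  Real.sqrt π * x * Real.exp (x ^ 2) * (1 - erf x)

noncomputable def Efun (x : ℝ) : ℝ := ∫ t in (0:ℝ)..x, Real.exp (-t ^ 2)
noncomputable def Jfun (x : ℝ) : ℝ := Real.sqrt π / 2 - Efun x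
noncomputable def hfun (x : ℝ) : ℝ := (1 + 2 * x ^ 2) * Jfun x - x * Real.exp (-x ^ 2)

lemma cont_gauss : Continuous fun t : ℝ => Real.exp (-t ^ 2) := by fun_prop

lemma integrable_gauss : MeasureTheory.Integrable fun t : ℝ => Real.exp (-t ^ 2) := by
  simpa using integrable_exp_neg_mul_sq (b := 1) one_pos

lemma integrable_mul_gauss : MeasureTheory.Integrable fun t : ℝ => t * Real.exp (-t ^ 2) := by
  simpa using integrable_mul_exp_neg_mul_sq (b := 1) one_pos

lemma J_eq_integral {x : ℝ} (hx : 0 ≤ x) : Jfun x = ∫ t in Ioi x, Real.exp (-t ^ 2) := by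
  have hsplit : (∫ t in Ioi (0:ℝ), Real.exp (-t ^ 2))
      = (∫ t in Ioc (0:ℝ) x, Real.exp (-t ^ 2)) + ∫ t in Ioi x, Real.exp (-t ^ 2) := by
    rw [← MeasureTheory.setIntegral_union (Ioc_disjoint_Ioi le_rfl) measurableSet_Ioi
      integrable_gauss.integrableOn integrable_gauss.integrableOn,
      Ioc_union_Ioi_eq_Ioi hx]
  have hgauss : (∫ t in Ioi (0:ℝ), Real.exp (-t ^ 2)) = Real.sqrt π / 2 := by
    simpa using integral_gaussian_Ioi 1
  have hE : Efun x = ∫ t in Ioc (0:ℝ) x, Real.exp (-t ^ 2) := by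
    rw [Efun, intervalIntegral.integral_of_le hx]
  rw [Jfun, hE]
  rw [hgauss] at hsplit
  linarith

lemma hasDerivAt_E (x : ℝ) : HasDerivAt Efun (Real.exp (-x ^ 2)) x := by
  exact intervalIntegral.integral_hasDerivAt_right
    (cont_gauss.intervalIntegrable _ _)
    (cont_gauss.stronglyMeasurableAtFilter _ _)
    cont_gauss.continuousAt

lemma hasDerivAt_J (x : ℝ) : HasDerivAt Jfun (-Real.exp (-x ^ 2)) x := by
  exact (hasDerivAt_E x).const_sub (Real.sqrt π / 2)

lemma J_pos {x : ℝ} (hx : 0 ≤ x) : 0 < Jfun x := by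
  rw [J_eq_integral hx]
  rw [MeasureTheory.setIntegral_pos_iff_support_of_nonneg_ae]
  · have hsub : Ioi x ⊆ (Function.support fun t : ℝ => Real.exp (-t ^ 2)) ∩ Ioi x := by
      intro t ht
      exact ⟨by simp [Function.mem_support, (Real.exp_pos _).ne'], ht⟩
    refine lt_of_lt_of_le ?_ (MeasureTheory.measure_mono hsub)
    simp [Real.volume_Ioi]
  · filter_upwards with t using (Real.exp_pos _).le
  · exact integrable_gauss.integrableOn

lemma moment (x : ℝ) : ∫ t in Ioi x, t * Real.exp (-t ^ 2) = Real.exp (-x ^ 2) / 2 := by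
  have hderiv : ∀ t ∈ Ici x, HasDerivAt (fun t : ℝ => -Real.exp (-t ^ 2) / 2)
      (t * Real.exp (-t ^ 2)) t := by
    intro t _
    have h1 : HasDerivAt (fun t : ℝ => -t ^ 2) (-(2 * t)) t := by
      simpa [Pi.neg_def] using (hasDerivAt_pow 2 t).neg
    have h3 := ((Real.hasDerivAt_exp (-t ^ 2)).comp t h1).neg.div_const 2
    refine h3.congr_deriv ?_
    ring
  have htend : Tendsto (fun t : ℝ => -Real.exp (-t ^ 2) / 2) atTop (nhds 0) := by
    have h1 : Tendsto (fun t : ℝ => -t ^ 2) atTop atBot :=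
      tendsto_neg_atBot_iff.mpr (tendsto_pow_atTop two_ne_zero)
    simpa using (Real.tendsto_exp_atBot.comp h1).neg.div_const 2
  have := MeasureTheory.integral_Ioi_of_hasDerivAt_of_tendsto' hderiv
    integrable_mul_gauss.integrableOn htend
  rw [this]; ring

lemma J_lt {x : ℝ} (hx : 0 < x) : Jfun x < Real.exp (-x ^ 2) / (2 * x) := by
  have h2 : (fun t : ℝ => (t / x - 1) * Real.exp (-t ^ 2))
      = fun t : ℝ => (1/x) * (t * Real.exp (-t ^ 2)) - Real.exp (-t ^ 2) := by
    funext t; field_simp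
  have key : 0 < ∫ t in Ioi x, (t / x - 1) * Real.exp (-t ^ 2) := by
    rw [MeasureTheory.setIntegral_pos_iff_support_of_nonneg_ae]
    · have hsub : Ioi x ⊆ (Function.support fun t : ℝ => (t / x - 1) * Real.exp (-t ^ 2)) ∩ Ioi x := by
        intro t ht
        refine ⟨?_, ht⟩
        simp only [Function.mem_support]
        have h1 : 0 < t / x - 1 := by
          rw [sub_pos, lt_div_iff₀ hx]; simpa using ht.out
        positivity
      refine lt_of_lt_of_le ?_ (MeasureTheory.measure_mono hsub)
      simp [Real.volume_Ioi]
    · filter_upwards [MeasureTheory.ae_restrict_mem measurableSet_Ioi] with t ht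
      have h1 : (0:ℝ) ≤ t / x - 1 := by
        rw [sub_nonneg, le_div_iff₀ hx]; simpa using ht.out.le
      positivity
    · apply MeasureTheory.Integrable.integrableOn
      rw [h2]
      exact (integrable_mul_gauss.const_mul _).sub integrable_gauss
  have heq : (∫ t in Ioi x, (t / x - 1) * Real.exp (-t ^ 2))
      = Real.exp (-x ^ 2) / (2 * x) - Jfun x := by
    rw [h2, MeasureTheory.integral_sub ((integrable_mul_gauss.const_mul _).integrableOn)
      integrable_gauss.integrableOn, MeasureTheory.integral_const_mul, moment,
      ← J_eq_integral hx.le]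
    field_simp
  rw [heq] at key; linarith

lemma hasDerivAt_h (x : ℝ) :
    HasDerivAt hfun (4 * x * Jfun x - 2 * Real.exp (-x ^ 2)) x := by
  have h1 : HasDerivAt (fun x : ℝ => 1 + 2 * x ^ 2) (2 * (2 * x)) x := by
    simpa using ((hasDerivAt_pow 2 x).const_mul 2).const_add 1
  have h2 : HasDerivAt (fun x : ℝ => -x ^ 2) (-(2 * x)) x := by
    simpa [Pi.neg_def] using (hasDerivAt_pow 2 x).neg
  have h3 := (Real.hasDerivAt_exp (-x ^ 2)).comp x h2
  have h4 := (h1.mul (hasDerivAt_J x)).sub ((hasDerivAt_id x).mul h3)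
  refine h4.congr_deriv ?_
  simp [hfun]
  ring

lemma tendsto_mul_exp_neg_sq : Tendsto (fun x : ℝ => x * Real.exp (-x ^ 2)) atTop (nhds 0) := by
  have hub : Tendsto (fun x : ℝ => x ^ 1 * Real.exp (-x)) atTop (nhds 0) :=
    tendsto_pow_mul_exp_neg_atTop_nhds_zero 1
  refine tendsto_of_tendsto_of_tendsto_of_le_of_le' tendsto_const_nhds (by simpa using hub) ?_ ?_
  · filter_upwards [eventually_ge_atTop (0:ℝ)] with x hx
    positivity
  · filter_upwards [eventually_ge_atTop (1:ℝ)] with x hx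
    have : Real.exp (-x ^ 2) ≤ Real.exp (-x) := by
      apply Real.exp_le_exp.mpr; nlinarith
    have hx0 : (0:ℝ) ≤ x := by linarith
    calc x * Real.exp (-x ^ 2) ≤ x * Real.exp (-x) := by nlinarith [Real.exp_pos (-x)]

lemma h_tendsto : Tendsto hfun atTop (nhds 0) := by
  have hJ : Tendsto (fun x : ℝ => (1 + 2 * x ^ 2) * Jfun x) atTop (nhds 0) := by
    refine tendsto_of_tendsto_of_tendsto_of_le_of_le' tendsto_const_nhds
      (by simpa using tendsto_mul_exp_neg_sq.const_mul 2) ?_ ?_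
    · filter_upwards [eventually_ge_atTop (0:ℝ)] with x hx
      have := J_pos hx
      nlinarith
    · filter_upwards [eventually_ge_atTop (1:ℝ)] with x hx
      have hx0 : (0:ℝ) < x := by linarith
      have hJlt := J_lt hx0
      have hb : (1 + 2 * x ^ 2) / (2 * x) ≤ 2 * x := by
        rw [div_le_iff₀ (by positivity)]; nlinarith
      calc (1 + 2 * x ^ 2) * Jfun x ≤ (1 + 2 * x ^ 2) * (Real.exp (-x ^ 2) / (2 * x)) := by
            nlinarith
        _ = (1 + 2 * x ^ 2) / (2 * x) * Real.exp (-x ^ 2) := by ring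
        _ ≤ 2 * x * Real.exp (-x ^ 2) := by nlinarith [Real.exp_pos (-x ^ 2)]
        _ = 2 * (x * Real.exp (-x ^ 2)) := by ring
  have := hJ.sub tendsto_mul_exp_neg_sq
  rw [sub_zero] at this
  exact this

lemma h_anti : StrictAntiOn hfun (Ioi 0) := by
  apply strictAntiOn_of_deriv_neg (convex_Ioi 0)
  · exact fun x _ => (hasDerivAt_h x).continuousAt.continuousWithinAt
  · intro x hx
    rw [interior_Ioi] at hx
    rw [(hasDerivAt_h x).deriv]
    have hx0 := hx.out
    have hJ2 : Jfun x * (2 * x) < Real.exp (-x ^ 2) :=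
      (lt_div_iff₀ (by positivity)).mp (J_lt hx0)
    nlinarith [Real.exp_pos (-x ^ 2)]

lemma h_pos {x : ℝ} (hx : 0 < x) : 0 < hfun x := by
  have h1 : hfun (x + 1) < hfun x := h_anti (by simp [hx] : (x:ℝ) ∈ Ioi 0)
    (by simp; linarith : (x + 1:ℝ) ∈ Ioi 0) (by linarith)
  have h2 : (0:ℝ) ≤ hfun (x + 1) := by
    refine le_of_tendsto h_tendsto ?_
    filter_upwards [eventually_ge_atTop (x + 1)] with y hy
    rcases eq_or_lt_of_le hy with rfl | hlt
    · exact le_rfl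
    · exact (h_anti (by simp; linarith : (x + 1:ℝ) ∈ Ioi 0)
        (by simp; linarith : y ∈ Ioi 0) hlt).le
  linarith

lemma G_eq (x : ℝ) : G x = 2 * x * Real.exp (x ^ 2) * Jfun x := by
  have hπ : (0:ℝ) < Real.sqrt π := Real.sqrt_pos.mpr pi_pos
  rw [G, erf, Jfun, Efun]
  field_simp

lemma hasDerivAt_G (x : ℝ) : HasDerivAt G (2 * Real.exp (x ^ 2) * hfun x) x := by
  have h2 : HasDerivAt (fun x : ℝ => x ^ 2) (2 * x) x := by simpa using hasDerivAt_pow 2 x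
  have h3 := (Real.hasDerivAt_exp (x ^ 2)).comp x h2
  have h4 : HasDerivAt (fun x : ℝ => 2 * x) 2 x := by simpa using (hasDerivAt_id x).const_mul 2
  have h5 := ((h4.mul h3).mul (hasDerivAt_J x))
  have h6 : HasDerivAt (fun x : ℝ => 2 * x * Real.exp (x ^ 2) * Jfun x)
      ((2 * Real.exp (x ^ 2) + 2 * x * (Real.exp (x ^ 2) * (2 * x))) * Jfun x
        + 2 * x * Real.exp (x ^ 2) * -Real.exp (-x ^ 2)) x := h5
  have h7 : HasDerivAt G ((2 * Real.exp (x ^ 2) + 2 * x * (Real.exp (x ^ 2) * (2 * x))) * Jfun x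
        + 2 * x * Real.exp (x ^ 2) * -Real.exp (-x ^ 2)) x := by
    apply h6.congr_of_eventuallyEq
    filter_upwards with y using G_eq y
  convert h7 using 1
  have : Real.exp (x ^ 2) * Real.exp (-x ^ 2) = 1 := by
    rw [← Real.exp_add]; simp
  simp only [hfun]
  nlinarith [this]

theorem stmt14 :
    StrictMonoOn G (Ioi (0:ℝ)) ∧
    (∀ x : ℝ, 0 < x → 0 < G x ∧ G x < 1) ∧
    Tendsto G atTop (nhds 1) := by
  refine ⟨?_, ?_, ?_⟩
  · apply strictMonoOn_of_deriv_pos (convex_Ioi 0)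
    · exact fun x _ => (hasDerivAt_G x).continuousAt.continuousWithinAt
    · intro x hx
      rw [interior_Ioi] at hx
      rw [(hasDerivAt_G x).deriv]
      have := h_pos hx.out
      positivity
  · intro x hx
    constructor
    · rw [G_eq]
      have := J_pos hx.le
      positivity
    · rw [G_eq]
      have hJlt := J_lt hx
      have he := Real.exp_pos (x ^ 2)
      have : Real.exp (x ^ 2) * Real.exp (-x ^ 2) = 1 := by
        rw [← Real.exp_add]; simp
      calc 2 * x * Real.exp (x ^ 2) * Jfun x
          < 2 * x * Real.exp (x ^ 2) * (Real.exp (-x ^ 2) / (2 * x)) := by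
            apply mul_lt_mul_of_pos_left hJlt; positivity
        _ = 1 := by field_simp; nlinarith
  · have hlow : Tendsto (fun x : ℝ => 1 - (1 + 2 * x ^ 2)⁻¹) atTop (nhds 1) := by
      have h1 : Tendsto (fun x : ℝ => 1 + 2 * x ^ 2) atTop atTop := by
        apply tendsto_atTop_add_const_left
        exact (tendsto_pow_atTop two_ne_zero).const_mul_atTop two_pos
      simpa using (tendsto_const_nhds (x := (1:ℝ))).sub (tendsto_inv_atTop_zero.comp h1)
    refine tendsto_of_tendsto_of_tendsto_of_le_of_le' hlow tendsto_const_nhds ?_ ?_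
    · filter_upwards [eventually_gt_atTop (0:ℝ)] with x hx
      have hh := h_pos hx
      have hJ : x * Real.exp (-x ^ 2) / (1 + 2 * x ^ 2) < Jfun x := by
        rw [div_lt_iff₀ (by positivity)]
        simp only [hfun] at hh
        nlinarith
      have hexp : Real.exp (x ^ 2) * Real.exp (-x ^ 2) = 1 := by
        rw [← Real.exp_add]; simp
      have key : 2 * x ^ 2 / (1 + 2 * x ^ 2) < G x := by
        rw [G_eq]
        calc 2 * x ^ 2 / (1 + 2 * x ^ 2)
            = 2 * x * Real.exp (x ^ 2) * (x * Real.exp (-x ^ 2) / (1 + 2 * x ^ 2)) := by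
              field_simp; nlinarith
          _ < 2 * x * Real.exp (x ^ 2) * Jfun x := by
              apply mul_lt_mul_of_pos_left hJ; positivity
      have heq : 1 - (1 + 2 * x ^ 2)⁻¹ = 2 * x ^ 2 / (1 + 2 * x ^ 2) := by
        field_simp
        ring
      linarith [heq ▸ key]
    · filter_upwards [eventually_gt_atTop (0:ℝ)] with x hx
      rw [G_eq]
      have hexp : Real.exp (x ^ 2) * Real.exp (-x ^ 2) = 1 := by
        rw [← Real.exp_add]; simp
      have hJ2 : Jfun x * (2 * x) < Real.exp (-x ^ 2) :=
        (lt_div_iff₀ (by positivity)).mp (J_lt hx)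
      nlinarith [mul_lt_mul_of_pos_left hJ2 (Real.exp_pos (x ^ 2)), hexp]
end

section
/- For $c, \xi > 0$, $\int_{\xi}^{\infty} \frac{e^{-c^2(v^2 - \xi^2)}}{v^2} dv = \frac{1}{\xi} - c\sqrt{\pi}\, e^{c^2\xi^2}(1 - \mathrm{erf}(c\xi)) = \frac{1}{\xi}\left(1 - \mathcal{G}(c\xi)\right)$, where $\mathcal{G}(x) = \sqrt{\pi} x e^{x^2}(1 - \mathrm{erf}(x))$; in particular this integral is positive and at most $1/\xi$. -/
open Real Set intervalIntegral MeasureTheory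
open Filter

theorem stmt16 (c ξ : ℝ) (hc : 0 < c) (hξ : 0 < ξ) :
    (∫ v in Ioi ξ, Real.exp (-c ^ 2 * (v ^ 2 - ξ ^ 2)) / v ^ 2) =
      1 / ξ - c * Real.sqrt π * Real.exp (c ^ 2 * ξ ^ 2) * (1 - erf (c * ξ)) ∧
    (∫ v in Ioi ξ, Real.exp (-c ^ 2 * (v ^ 2 - ξ ^ 2)) / v ^ 2) =
      (1 / ξ) * (1 - G (c * ξ)) ∧
    0 < (∫ v in Ioi ξ, Real.exp (-c ^ 2 * (v ^ 2 - ξ ^ 2)) / v ^ 2) ∧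
    (∫ v in Ioi ξ, Real.exp (-c ^ 2 * (v ^ 2 - ξ ^ 2)) / v ^ 2) ≤ 1 / ξ := by
  have hc2 : (0:ℝ) < c ^ 2 := by positivity
  set g : ℝ → ℝ := fun v => Real.exp (-c ^ 2 * (v ^ 2 - ξ ^ 2)) with hg_def
  set f : ℝ → ℝ := fun v => Real.exp (-c ^ 2 * (v ^ 2 - ξ ^ 2)) / v ^ 2 with hf_def
  -- g as a constant times a Gaussian
  have hg_eq : ∀ v : ℝ, g v = Real.exp (c ^ 2 * ξ ^ 2) * Real.exp (-c ^ 2 * v ^ 2) := by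
    intro v
    simp only [hg_def]
    rw [← Real.exp_add]
    congr 1
    ring
  -- integrability of g on Ioi ξ
  have hgint : IntegrableOn g (Ioi ξ) := by
    have : Integrable (fun v : ℝ => Real.exp (c ^ 2 * ξ ^ 2) * Real.exp (-c ^ 2 * v ^ 2)) :=
      (integrable_exp_neg_mul_sq hc2).const_mul _
    exact (this.congr (Filter.Eventually.of_forall fun v => (hg_eq v).symm)).integrableOn
  -- integrability of f on Ioi ξ
  have hfmeas : AEStronglyMeasurable f (volume.restrict (Ioi ξ)) := by
    apply (ContinuousOn.aestronglyMeasurable ?_ measurableSet_Ioi)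
    apply ContinuousOn.div
    · exact (Real.continuous_exp.comp (by continuity)).continuousOn
    · exact (continuous_pow 2).continuousOn
    · intro v hv
      have : (0:ℝ) < v := hξ.trans hv
      positivity
  have hfint : IntegrableOn f (Ioi ξ) := by
    refine Integrable.mono' (g := fun v => ξ⁻¹ ^ 2 * g v) (hgint.const_mul _) hfmeas ?_
    filter_upwards [MeasureTheory.ae_restrict_mem measurableSet_Ioi] with v hv
    have hv0 : (0:ℝ) < v := hξ.trans hv
    have h1 : f v = g v / v ^ 2 := rfl
    rw [Real.norm_eq_abs, h1, abs_of_nonneg (by positivity)]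
    rw [div_le_iff₀ (by positivity)]
    have : ξ ^ 2 ≤ v ^ 2 := by nlinarith [le_of_lt (mem_Ioi.mp hv)]
    have hgv : 0 < g v := Real.exp_pos _
    calc g v = ξ⁻¹ ^ 2 * g v * ξ ^ 2 := by field_simp
      _ ≤ ξ⁻¹ ^ 2 * g v * v ^ 2 := by
          apply mul_le_mul_of_nonneg_left this (by positivity)
  -- FTC on Ioi ξ
  have key : (∫ v in Ioi ξ, (f v + 2 * c ^ 2 * g v)) = 1 / ξ := by
    have hderiv : ∀ x ∈ Ici ξ, HasDerivAt (fun v => -(g v / v)) (f x + 2 * c ^ 2 * g x) x := by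
      intro x hx
      have hx0 : x ≠ 0 := (hξ.trans_le hx).ne'
      have hgd : HasDerivAt g (Real.exp (-c ^ 2 * (x ^ 2 - ξ ^ 2)) * (-c ^ 2 * (2 * x))) x := by
        have h1 : HasDerivAt (fun v : ℝ => -c ^ 2 * (v ^ 2 - ξ ^ 2)) (-c ^ 2 * (2 * x)) x := by
          have h2 : HasDerivAt (fun v : ℝ => v ^ 2 - ξ ^ 2) (2 * x) x := by
            simpa using (hasDerivAt_pow 2 x).sub_const (ξ ^ 2)
          simpa using h2.const_mul (-c ^ 2)
        exact h1.exp
      have : HasDerivAt (fun v => -(g v / v)) _ x := (hgd.div (hasDerivAt_id' x) hx0).neg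
      convert this using 1
      simp only [hf_def, hg_def, id_eq]
      field_simp
      ring
    have htend : Tendsto (fun v => -(g v / v)) atTop (nhds 0) := by
      apply squeeze_zero_norm' (a := fun v => Real.exp (c ^ 2 * ξ ^ 2) * v⁻¹)
      · filter_upwards [eventually_ge_atTop ξ, eventually_gt_atTop (0:ℝ)] with v hv hv0
        rw [norm_neg, norm_div, Real.norm_eq_abs, Real.norm_eq_abs,
          abs_of_nonneg (Real.exp_pos _).le, abs_of_pos hv0]
        rw [div_eq_mul_inv]
        apply mul_le_mul_of_nonneg_right _ (by positivity)
        rw [Real.exp_le_exp]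
        nlinarith
      · simpa using tendsto_inv_atTop_zero.const_mul (Real.exp (c ^ 2 * ξ ^ 2))
    have hint : IntegrableOn (fun v => f v + 2 * c ^ 2 * g v) (Ioi ξ) :=
      hfint.add (hgint.const_mul _)
    have := integral_Ioi_of_hasDerivAt_of_tendsto' hderiv hint htend
    rw [this]
    simp [hg_def]
  have hsplit : (∫ v in Ioi ξ, f v) = 1 / ξ - 2 * c ^ 2 * ∫ v in Ioi ξ, g v := by
    rw [← key, integral_add hfint (hgint.const_mul _), MeasureTheory.integral_const_mul]
    ring
  -- compute ∫ g
  have hJ : (∫ v in Ioi ξ, Real.exp (-c ^ 2 * v ^ 2)) =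
      Real.sqrt π / (2 * c) - c⁻¹ * ∫ t in (0:ℝ)..(c * ξ), Real.exp (-t ^ 2) := by
    have hsplit2 : (∫ v in Ioi (0:ℝ), Real.exp (-c ^ 2 * v ^ 2)) =
        (∫ v in Ioc (0:ℝ) ξ, Real.exp (-c ^ 2 * v ^ 2)) +
          ∫ v in Ioi ξ, Real.exp (-c ^ 2 * v ^ 2) := by
      rw [← setIntegral_union (Ioc_disjoint_Ioi le_rfl) measurableSet_Ioi
        ((integrable_exp_neg_mul_sq hc2).integrableOn)
        ((integrable_exp_neg_mul_sq hc2).integrableOn),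
        Ioc_union_Ioi_eq_Ioi hξ.le]
    have h1 : (∫ v in Ioi (0:ℝ), Real.exp (-c ^ 2 * v ^ 2)) = Real.sqrt π / (2 * c) := by
      rw [integral_gaussian_Ioi]
      rw [show π / c ^ 2 = π * (c⁻¹) ^ 2 by field_simp]
      rw [Real.sqrt_mul' _ (by positivity), Real.sqrt_sq (by positivity)]
      field_simp
    have h2 : (∫ v in Ioc (0:ℝ) ξ, Real.exp (-c ^ 2 * v ^ 2)) =
        c⁻¹ * ∫ t in (0:ℝ)..(c * ξ), Real.exp (-t ^ 2) := by
      rw [← intervalIntegral.integral_of_le hξ.le]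
      have : ∀ v : ℝ, Real.exp (-c ^ 2 * v ^ 2) = Real.exp (-(c * v) ^ 2) := by
        intro v; ring_nf
      simp_rw [this]
      have := intervalIntegral.integral_comp_mul_left
        (a := (0:ℝ)) (b := ξ) (fun t => Real.exp (-t ^ 2)) hc.ne'
      rw [this, mul_zero]
      simp [smul_eq_mul]
    linarith [hsplit2, h1, h2]
  have hgval : (∫ v in Ioi ξ, g v) =
      Real.exp (c ^ 2 * ξ ^ 2) *
        (Real.sqrt π / (2 * c) - c⁻¹ * ∫ t in (0:ℝ)..(c * ξ), Real.exp (-t ^ 2)) := by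
    calc (∫ v in Ioi ξ, g v)
        = ∫ v in Ioi ξ, Real.exp (c ^ 2 * ξ ^ 2) * Real.exp (-c ^ 2 * v ^ 2) := by
          apply setIntegral_congr_fun measurableSet_Ioi
          intro v _; exact hg_eq v
      _ = Real.exp (c ^ 2 * ξ ^ 2) * ∫ v in Ioi ξ, Real.exp (-c ^ 2 * v ^ 2) :=
          MeasureTheory.integral_const_mul _ _
      _ = _ := by rw [hJ]
  -- first equality
  have e1 : (∫ v in Ioi ξ, f v) =
      1 / ξ - c * Real.sqrt π * Real.exp (c ^ 2 * ξ ^ 2) * (1 - erf (c * ξ)) := by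
    rw [hsplit, hgval, erf]
    have hπ : Real.sqrt π ≠ 0 := (Real.sqrt_pos.mpr Real.pi_pos).ne'
    field_simp
  refine ⟨e1, ?_, ?_, ?_⟩
  · rw [e1, G, erf, mul_pow]
    field_simp
  · rw [MeasureTheory.setIntegral_pos_iff_support_of_nonneg_ae ?_ hfint]
    · have hsub : Ioi ξ ⊆ Function.support f := by
        intro v hv
        have : (0:ℝ) < v := hξ.trans hv
        simp only [hf_def, Function.mem_support]
        positivity
      rw [Set.inter_eq_self_of_subset_right hsub, Real.volume_Ioi]
      exact ENNReal.zero_lt_top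
    · filter_upwards [MeasureTheory.ae_restrict_mem measurableSet_Ioi] with v hv
      have : (0:ℝ) < v := hξ.trans hv
      simp only [hf_def, Pi.zero_apply]
      positivity
  · rw [hsplit]
    have : 0 ≤ ∫ v in Ioi ξ, g v := by
      apply setIntegral_nonneg measurableSet_Ioi
      intro v _; exact (Real.exp_pos _).le
    nlinarith
end
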